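/- Let D be a division ring with center F and G a subgroup of D* such that G/(G ∩ F*) is locally finite. Then the division subring F(G) of D generated by F and G is locally finite dimensional over F; that is, every finite subset of F(G) is contained in a division subring of D that is finite dimensional as an F-vector space. -/

import Mathlib

/-- A group is locally finite if every finitely generated subgroup is finite. -/
def IsLocallyFinite (G : Type*) [Group G] : Prop :=
  ∀ H : Subgroup G, H.FG → Finite H

/-- A division subring `E` of `D` is finite dimensional over the center `F` of `D`
if finitely many of its elements span it as a left `F`-vector space. -/
def FinDimOverCenter {D : Type*} [DivisionRing D] (E : Subfield D) : Prop :=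
  ∃ (n : ℕ) (b : Fin n → D), (∀ i, b i ∈ E) ∧
    ∀ y ∈ E, ∃ c : Fin n → Subring.center D, y = ∑ i, (c i : D) * b i

/-- Main auxiliary step: for a finite set `T` of elements of `G`, the division
subring generated by the center together with `T` is contained in a division
subring which is finite dimensional over the center and is contained in the
division subring generated by the center and all of `G`. -/
theorem auxFinDim (D : Type*) [DivisionRing D] (G : Subgroup Dˣ) (N : Subgroup G)
    (hN : ∀ g : G, g ∈ N ↔ ((g : Dˣ) : D) ∈ Subring.center D) [N.Normal]
    (hlf : IsLocallyFinite (G ⧸ N)) (T : Finset G) :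
    ∃ E : Subfield D,
      Subfield.closure ((Subring.center D : Set D) ∪ ((fun g : G => ((g : Dˣ) : D)) '' ↑T)) ≤ E ∧
      (E : Set D) ⊆
        (Subfield.closure ((Subring.center D : Set D) ∪ (Units.val '' (G : Set Dˣ))) : Set D) ∧
      FinDimOverCenter E := by
  classical
  set F := Subring.center D with hF
  set H : Subgroup G := Subgroup.closure (↑T : Set G) with hH
  set π : G →* G ⧸ N := QuotientGroup.mk' N with hπ
  set Q : Subgroup (G ⧸ N) := H.map π with hQ
  have hQfg : Q.FG := ⟨T.image π, by rw [Finset.coe_image, ← MonoidHom.map_closure]⟩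
  have hQfin : Finite Q := hlf Q hQfg
  haveI : Fintype Q := Fintype.ofFinite Q
  choose rep hrepH hrepπ using fun q : Q => Subgroup.mem_map.mp q.2
  set n := Fintype.card Q with hn
  set e : Fin n ≃ Q := (Fintype.equivFin Q).symm with he
  set b : Fin n → D := fun i => ((rep (e i) : Dˣ) : D) with hb
  set W : Submodule F D := Submodule.span F (Set.range b) with hW
  -- every element of H lands in W
  have memW : ∀ h : G, h ∈ H → ((h : Dˣ) : D) ∈ W := by
    intro h hh
    set q : Q := ⟨π h, Subgroup.mem_map.mpr ⟨h, hh, rfl⟩⟩ with hq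
    have h1 : π (rep q) = π h := hrepπ q
    obtain ⟨z, hzN, hz⟩ := (QuotientGroup.mk'_eq_mk' N).mp h1
    have hc : ((z : Dˣ) : D) ∈ F := (hN z).mp hzN
    have key : ((h : Dˣ) : D) = (⟨_, hc⟩ : F) • b (e.symm q) := by
      have hcomm : ∀ g : D, g * ((z : Dˣ) : D) = ((z : Dˣ) : D) * g :=
        Subring.mem_center_iff.mp hc
      have : ((rep q : Dˣ) : D) * ((z : Dˣ) : D) = ((h : Dˣ) : D) := by
        rw [← hz]; push_cast; ring_nf
      calc ((h : Dˣ) : D) = ((rep q : Dˣ) : D) * ((z : Dˣ) : D) := this.symm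
        _ = ((z : Dˣ) : D) * ((rep q : Dˣ) : D) := hcomm _
        _ = (⟨_, hc⟩ : F) • b (e.symm q) := by
              simp only [hb, Equiv.apply_symm_apply]; rfl
    rw [key]
    exact W.smul_mem _ (Submodule.subset_span ⟨e.symm q, rfl⟩)
  have one_memW : (1 : D) ∈ W := by simpa using memW 1 H.one_mem
  have smul_eq : ∀ (c : F) (x : D), c • x = (c : D) * x := fun _ _ => rfl
  have mul_memW : ∀ x ∈ W, ∀ y ∈ W, x * y ∈ W := by
    intro x hx
    induction hx using Submodule.span_induction with
    | mem x hxmem =>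
      obtain ⟨i, rfl⟩ := hxmem
      intro y hy
      induction hy using Submodule.span_induction with
      | mem y hymem =>
        obtain ⟨j, rfl⟩ := hymem
        have : b i * b j = (((rep (e i) * rep (e j) : G) : Dˣ) : D) := by push_cast; rfl
        rw [this]
        exact memW _ (H.mul_mem (hrepH _) (hrepH _))
      | zero => simpa using W.zero_mem
      | add y z hy hz ihy ihz => rw [mul_add]; exact W.add_mem ihy ihz
      | smul c y hy ihy =>
        have : b i * (c • y) = c • (b i * y) := by
          rw [smul_eq, smul_eq, ← mul_assoc, ← mul_assoc,
            Subring.mem_center_iff.mp c.2 (b i)]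
        rw [this]; exact W.smul_mem _ ihy
    | zero => intro y _; simpa using W.zero_mem
    | add x z hx hz ihx ihz => intro y hy; rw [add_mul]; exact W.add_mem (ihx y hy) (ihz y hy)
    | smul c x hx ihx =>
      intro y hy
      rw [smul_eq, mul_assoc, ← smul_eq]
      exact W.smul_mem _ (ihx y hy)
  have inv_memW : ∀ x ∈ W, x⁻¹ ∈ W := by
    intro x hx
    rcases eq_or_ne x 0 with rfl | hx0
    · simpa using W.zero_mem
    haveI : FiniteDimensional F W := FiniteDimensional.span_of_finite F (Set.finite_range b)
    let f : W →ₗ[F] W :=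
      { toFun := fun y => ⟨x * y, mul_memW x hx y y.2⟩
        map_add' := by intro a c; ext; simp [mul_add]
        map_smul' := by
          intro c a; ext
          show x * (c • (a : D)) = c • (x * (a : D))
          rw [smul_eq, smul_eq, ← mul_assoc, ← mul_assoc,
            Subring.mem_center_iff.mp c.2 x] }
    have finj : Function.Injective f := by
      intro a c hac
      have : x * a = x * c := congrArg Subtype.val hac
      exact Subtype.ext (mul_left_cancel₀ hx0 this)
    obtain ⟨y, hy⟩ := LinearMap.injective_iff_surjective.mp finj ⟨1, one_memW⟩
    have hxy : x * y = 1 := congrArg Subtype.val hy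
    rw [inv_eq_of_mul_eq_one_right hxy]
    exact y.2
  let E₀ : Subring D :=
    { carrier := ↑W
      one_mem' := one_memW
      mul_mem' := fun ha hb => mul_memW _ ha _ hb
      zero_mem' := W.zero_mem
      add_mem' := fun ha hb => W.add_mem ha hb
      neg_mem' := fun ha => W.neg_mem ha }
  let E : Subfield D := { E₀ with inv_mem' := inv_memW }
  have hEmem : ∀ x : D, x ∈ E ↔ x ∈ W := fun x => Iff.rfl
  refine ⟨E, ?_, ?_, ?_⟩
  · -- closure (F ∪ T) ≤ E
    rw [Subfield.closure_le]
    rintro x (hx | ⟨t, ht, rfl⟩)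
    · have : (⟨x, hx⟩ : F) • (1 : D) ∈ W := W.smul_mem _ one_memW
      exact (hEmem x).mpr (by simpa [smul_eq] using this)
    · exact memW t (Subgroup.subset_closure ht)
  · -- E ⊆ big closure
    intro x hx
    have hx' : x ∈ W := hx
    clear hx
    induction hx' using Submodule.span_induction with
    | mem x hxmem =>
      obtain ⟨i, rfl⟩ := hxmem
      exact Subfield.subset_closure (Or.inr ⟨((rep (e i) : Dˣ)), (rep (e i)).2, rfl⟩)
    | zero => exact zero_mem _
    | add x y _ _ ihx ihy => exact add_mem ihx ihy
    | smul c x _ ihx =>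
      rw [smul_eq]
      exact mul_mem (Subfield.subset_closure (Or.inl c.2)) ihx
  · -- finite dimensionality
    refine ⟨n, b, fun i => Submodule.subset_span ⟨i, rfl⟩, ?_⟩
    intro y hy
    have hy' : y ∈ Submodule.span F (Set.range b) := hy
    obtain ⟨c, hc⟩ := (Submodule.mem_span_range_iff_exists_fun F).mp hy'
    exact ⟨c, by rw [← hc]; exact Finset.sum_congr rfl fun i _ => rfl⟩

set_option maxHeartbeats 1000000 in
/-- Let `D` be a division ring with center `F` and `G ≤ Dˣ` such that `G/(G ∩ F*)`
is locally finite.  Then the division subring `F(G)` generated by `F ∪ G` is locally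
finite dimensional over `F`: every finite subset of `F(G)` is contained in a
division subring of `D` that is finite dimensional over `F`. -/
theorem locallyFiniteDim_of_centerQuotient_locallyFinite
    (D : Type*) [DivisionRing D] (G : Subgroup Dˣ)
    (N : Subgroup G)
    (hN : ∀ g : G, g ∈ N ↔ ((g : Dˣ) : D) ∈ Subring.center D)
    [N.Normal]
    (hlf : IsLocallyFinite (G ⧸ N)) :
    ∀ s : Finset D,
      (↑s : Set D) ⊆
        (Subfield.closure ((Subring.center D : Set D) ∪ (Units.val '' (G : Set Dˣ))) : Set D) →
      ∃ E : Subfield D, (↑s : Set D) ⊆ (E : Set D) ∧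
        (E : Set D) ⊆
          (Subfield.closure ((Subring.center D : Set D) ∪ (Units.val '' (G : Set Dˣ))) : Set D) ∧
        FinDimOverCenter E := by
  classical
  intro s hs
  set fam : Finset G → Subfield D := fun T =>
    Subfield.closure ((Subring.center D : Set D) ∪ ((fun g : G => ((g : Dˣ) : D)) '' ↑T))
    with hfam
  have mono : Monotone fam := fun T₁ T₂ hT =>
    Subfield.closure_mono (Set.union_subset_union_right _
      (Set.image_mono (Finset.coe_subset.mpr hT)))
  have directed : Directed (· ≤ ·) fam := fun T₁ T₂ =>
    ⟨T₁ ∪ T₂, mono Finset.subset_union_left, mono Finset.subset_union_right⟩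
  have hK : Subfield.closure ((Subring.center D : Set D) ∪ (Units.val '' (G : Set Dˣ)))
      ≤ ⨆ T, fam T := by
    rw [Subfield.closure_le]
    rintro x (hx | ⟨u, hu, rfl⟩)
    · exact SetLike.le_def.mp (le_iSup fam ∅) (Subfield.subset_closure (Or.inl hx))
    · exact SetLike.le_def.mp (le_iSup fam {(⟨u, hu⟩ : G)})
        (Subfield.subset_closure (Or.inr ⟨⟨u, hu⟩, by
          simp only [Finset.coe_singleton, Set.mem_singleton_iff], rfl⟩))
  have hs' : ∀ x : s, ∃ T : Finset G, (x : D) ∈ fam T := by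
    intro x
    have hx : (x : D) ∈ ⨆ T, fam T := hK (hs x.2)
    rw [← SetLike.mem_coe, Subfield.coe_iSup_of_directed directed] at hx
    simpa using hx
  choose t ht using hs'
  set T : Finset G := Finset.univ.sup t with hT
  obtain ⟨E, hE1, hE2, hE3⟩ := auxFinDim D G N hN hlf T
  refine ⟨E, ?_, hE2, hE3⟩
  intro x hx
  have h1 : (x : D) ∈ fam (t ⟨x, hx⟩) := ht ⟨x, hx⟩
  have h2 : t ⟨x, hx⟩ ≤ T := Finset.le_sup (Finset.mem_univ (⟨x, hx⟩ : s))
  have h3 : fam (t ⟨x, hx⟩) ≤ fam T := mono h2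
  have h4 : (x : D) ∈ fam T := h3 h1
  exact hE1 h4
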